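/- Let M be a smooth manifold, π ∈ Γ(∧²TM) a bivector field and R ∈ Γ(TM) a vector field, and define the Lichnerowicz bracket {f,g} := π(df,dg) + f·R[g] − g·R[f] on C^∞(M). This bracket is antisymmetric and ℝ-bilinear, and it satisfies the Jacobi identity if and only if [R,π] = 0 and [π,π] + 2 R∧π = 0, where [,] denotes the Schouten–Nijenhuis bracket. -/
import Mathlib

section Aux

variable {R : Type*} [CommRing R] [Algebra ℝ R]
    (pi : R →ₗ[ℝ] Derivation ℝ R R)
    (hpi_anti : ∀ f g : R, pi f g = - pi g f)
    (Rv : Derivation ℝ R R)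

include hpi_anti in
/-- Key algebraic identity: the Jacobiator of the Lichnerowicz bracket splits as
`E(f,g,h) + f·D(g,h) + g·D(h,f) + h·D(f,g)`. -/
lemma stmt9_key (f g h : R) :
    (pi f (pi g h + g * Rv h - h * Rv g) + f * Rv (pi g h + g * Rv h - h * Rv g)
        - (pi g h + g * Rv h - h * Rv g) * Rv f)
    + (pi g (pi h f + h * Rv f - f * Rv h) + g * Rv (pi h f + h * Rv f - f * Rv h)
        - (pi h f + h * Rv f - f * Rv h) * Rv g)
    + (pi h (pi f g + f * Rv g - g * Rv f) + h * Rv (pi f g + f * Rv g - g * Rv f)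
        - (pi f g + f * Rv g - g * Rv f) * Rv h)
    = ((pi f (pi g h) + pi g (pi h f) + pi h (pi f g))
        + (Rv f * pi g h + Rv g * pi h f + Rv h * pi f g))
      + f * (Rv (pi g h) - pi (Rv g) h - pi g (Rv h))
      + g * (Rv (pi h f) - pi (Rv h) f - pi h (Rv f))
      + h * (Rv (pi f g) - pi (Rv f) g - pi f (Rv g)) := by
  simp only [map_add, map_sub, Derivation.leibniz, smul_eq_mul]
  linear_combination (-(Rv h)) * hpi_anti g f + (-(Rv g)) * hpi_anti f h
    + (-(Rv f)) * hpi_anti h g + f * hpi_anti h (Rv g) + g * hpi_anti f (Rv h)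
    + h * hpi_anti g (Rv f)

include hpi_anti in
lemma stmt9_pi_one (x : R) : pi (1 : R) x = 0 := by
  rw [hpi_anti]; simp

end Aux

/-- Lichnerowicz bracket: for a bivector `π` (an alternating biderivation of
`R = C^∞(M)`) and a vector field `Rv`, the bracket
`{f,g} = π(df,dg) + f·Rv[g] − g·Rv[f]` is antisymmetric and ℝ-bilinear, and it
satisfies the Jacobi identity iff `[Rv,π] = 0` and `[π,π] + 2 Rv∧π = 0`
(Schouten–Nijenhuis brackets, evaluated on exact differentials). -/
theorem stmt9 (R : Type*) [CommRing R] [Algebra ℝ R]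
    (pi : R →ₗ[ℝ] Derivation ℝ R R)
    (hpi_anti : ∀ f g : R, pi f g = - pi g f)
    (Rv : Derivation ℝ R R) :
    (∀ f g : R,
      pi f g + f * Rv g - g * Rv f = -(pi g f + g * Rv f - f * Rv g)) ∧
    (∀ f g h : R,
      pi (f + g) h + (f + g) * Rv h - h * Rv (f + g)
        = (pi f h + f * Rv h - h * Rv f) + (pi g h + g * Rv h - h * Rv g)) ∧
    (∀ (c : ℝ) (f g : R),
      pi (c • f) g + (c • f) * Rv g - g * Rv (c • f)
        = c • (pi f g + f * Rv g - g * Rv f)) ∧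
    (((∀ f g h : R,
        (fun a b : R => pi a b + a * Rv b - b * Rv a) f
            ((fun a b : R => pi a b + a * Rv b - b * Rv a) g h)
        + (fun a b : R => pi a b + a * Rv b - b * Rv a) g
            ((fun a b : R => pi a b + a * Rv b - b * Rv a) h f)
        + (fun a b : R => pi a b + a * Rv b - b * Rv a) h
            ((fun a b : R => pi a b + a * Rv b - b * Rv a) f g) = 0)
      ↔
      ((∀ f g : R, Rv (pi f g) - pi (Rv f) g - pi f (Rv g) = 0) ∧
       (∀ f g h : R,
         (pi f (pi g h) + pi g (pi h f) + pi h (pi f g))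
           + (Rv f * pi g h + Rv g * pi h f + Rv h * pi f g) = 0)))) := by
  refine ⟨?_, ?_, ?_, ?_⟩
  · intro f g; linear_combination hpi_anti f g
  · intro f g h
    simp only [map_add, Derivation.add_apply]
    ring
  · intro c f g
    simp only [map_smul, Derivation.map_smul, Derivation.smul_apply, smul_sub, smul_add,
      smul_mul_assoc, mul_smul_comm]
  · constructor
    · intro hJ
      have hD : ∀ f g : R, Rv (pi f g) - pi (Rv f) g - pi f (Rv g) = 0 := by
        intro g h
        have h1 := hJ 1 g h
        simp only at h1
        have hk := stmt9_key pi hpi_anti Rv 1 g h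
        rw [h1] at hk
        simpa [stmt9_pi_one pi hpi_anti] using hk.symm
      refine ⟨hD, ?_⟩
      intro f g h
      have h1 := hJ f g h
      simp only at h1
      have hk := stmt9_key pi hpi_anti Rv f g h
      rw [h1, hD g h, hD h f, hD f g] at hk
      linear_combination -hk
    · rintro ⟨hD, hE⟩ f g h
      simp only
      rw [stmt9_key pi hpi_anti Rv f g h, hD g h, hD h f, hD f g, hE f g h]
      ring
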